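/- Let k be a field and A an associative unital k-algebra whose dimension as a k-vector space is strictly smaller than the cardinality of k. Let N be a simple left A-module. Then every A-linear endomorphism of N is algebraic over k; that is, the division ring End_A(N) is algebraic over k (where k maps into End_A(N) via scalar multiplication). -/

import Mathlib

open Cardinal

lemma aux_transcendental_rank (k : Type) [Field k] (D : Type) [DivisionRing D] [Algebra k D]
    {f : D} (hf : Transcendental k f) : Cardinal.mk k ≤ Module.rank k D := by
  classical
  -- the commutative double centralizer of {f} ∪ range (algebraMap k D)
  set S : Set D := insert f (Set.range (algebraMap k D)) with hS
  have hScomm : ∀ x ∈ S, ∀ y ∈ S, x * y = y * x := by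
    rintro x hx y hy
    rcases hx with rfl | ⟨a, rfl⟩
    · rcases hy with rfl | ⟨b, rfl⟩
      · rfl
      · exact (Algebra.commutes b x).symm
    · exact Algebra.commutes a y
  set C : Subring D := Subring.centralizer ((Subring.centralizer S : Subring D) : Set D) with hC
  have hSsubcent : S ⊆ (Subring.centralizer S : Subring D) := by
    intro x hx
    exact Subring.mem_centralizer_iff.mpr fun g hg => (hScomm x hx g hg).symm
  have hSsub : S ⊆ (C : Set D) := by
    intro x hx
    exact Subring.mem_centralizer_iff.mpr fun g hg => (Subring.mem_centralizer_iff.mp hg x hx).symm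
  have hCsub : (C : Set D) ⊆ (Subring.centralizer S : Subring D) := by
    have := Subring.centralizer_le _ _ hSsubcent
    exact this
  have hCcomm : ∀ x y : C, x * y = y * x := by
    rintro ⟨x, hx⟩ ⟨y, hy⟩
    ext
    exact (Subring.mem_centralizer_iff.mp hx y (hCsub hy)).symm
  have hinv : ∀ x : D, x ∈ C → x⁻¹ ∈ C := by
    intro x hx
    refine Subring.mem_centralizer_iff.mpr fun g hg => ?_
    exact Commute.inv_right₀ (Subring.mem_centralizer_iff.mp hx g hg)
  letI instCR : CommRing C := { (inferInstance : Ring C) with mul_comm := hCcomm }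
  letI instF : Field C :=
    { instCR with
      inv := fun x => ⟨(x : D)⁻¹, hinv x x.2⟩
      inv_zero := by ext; simp
      mul_inv_cancel := by
        rintro ⟨x, hx⟩ h
        have hx0 : x ≠ 0 := by simpa [Subtype.ext_iff] using h
        ext
        simpa using mul_inv_cancel₀ hx0
      nnqsmul := _
      qsmul := _ }
  letI instAlg : Algebra k C :=
    ((algebraMap k D).codRestrict C fun a => hSsub (Set.mem_insert_iff.mpr
      (Or.inr ⟨a, rfl⟩))).toAlgebra
  set x : C := ⟨f, hSsub (Set.mem_insert _ _)⟩ with hxdef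
  let ι : C →ₐ[k] D := { C.subtype with commutes' := fun r => rfl }
  have hx : Transcendental k x := by
    intro hxalg
    obtain ⟨P, hP0, hP⟩ := hxalg
    exact hf ⟨P, hP0, by
      have := congrArg ι hP
      rwa [← Polynomial.aeval_algHom_apply, map_zero] at this⟩
  have li := hx.linearIndependent_sub_inv
  have li2 := li.map' ι.toLinearMap (by
    rw [LinearMap.ker_eq_bot]
    exact Subtype.val_injective)
  exact li2.cardinal_le_rank

/-- **Dixmier's amplification of Schur's lemma.** If `A` is a
`k`-algebra of `k`-dimension strictly smaller than the cardinality of `k` and `N`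
is a simple left `A`-module, then every `A`-linear endomorphism of `N` is
algebraic over `k`. -/
theorem end_of_simple_module_is_algebraic
    (k : Type) [Field k]
    (A : Type) [Ring A] [Algebra k A]
    (hdim : Module.rank k A < Cardinal.mk k)
    (N : Type) [AddCommGroup N] [Module A N] [Module k N]
    [SMulCommClass A k N] [IsScalarTower k A N]
    [IsSimpleModule A N]
    (f : Module.End A N) :
    IsAlgebraic k f := by
  classical
  by_contra hf
  have hf' : Transcendental k f := hf
  letI : DivisionRing (Module.End A N) := Module.End.instDivisionRing
  have h1 : Cardinal.mk k ≤ Module.rank k (Module.End A N) :=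
    aux_transcendental_rank k _ hf'
  have : Nontrivial N := IsSimpleModule.nontrivial A N
  obtain ⟨n, hn⟩ : ∃ n : N, n ≠ 0 := exists_ne 0
  let ev : Module.End A N →ₗ[k] N :=
    { toFun := fun φ => φ n
      map_add' := fun φ ψ => rfl
      map_smul' := fun c φ => rfl }
  have hevinj : Function.Injective ev := by
    intro φ ψ h
    by_contra hne
    have h0 : φ - ψ ≠ 0 := sub_ne_zero.mpr hne
    have hinj := LinearMap.injective_of_ne_zero h0
    have : (φ - ψ) n = 0 := by
      simpa [ev, sub_eq_zero] using h
    exact hn (hinj (by simpa using this))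
  have h2 : Module.rank k (Module.End A N) ≤ Module.rank k N :=
    ev.rank_le_of_injective hevinj
  let μA : A →ₗ[A] N := LinearMap.toSpanSingleton A N n
  have hsurj : Function.Surjective μA := by
    have := (IsSimpleOrder.eq_bot_or_eq_top (LinearMap.range μA)).resolve_left (by
      intro hbot
      apply hn
      have : n ∈ LinearMap.range μA := ⟨1, one_smul A n⟩
      rw [hbot] at this
      simpa using this)
    rw [← LinearMap.range_eq_top]
    exact this
  let μ : A →ₗ[k] N :=
    { toFun := fun r => r • n
      map_add' := fun r s => add_smul r s n
      map_smul' := fun c r => smul_assoc c r n }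
  have h3 : Module.rank k N ≤ Module.rank k A :=
    μ.rank_le_of_surjective (by
      intro x
      obtain ⟨r, hr⟩ := hsurj x
      exact ⟨r, hr⟩)
  exact absurd (lt_of_le_of_lt (h1.trans (h2.trans h3)) hdim) (lt_irrefl _)
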